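/- Let D, t ∈ ℝ³, let N' be the single-qubit normal-form map with parameters (D,t), and let k ≥ 1. Let H be a Hermitian 2^k×2^k matrix of the form H = Σ_{P∈{X,Y,Z}} Σ_{Q∈P_{k−1}} b_{P,Q} · (P⊗Q) with real coefficients b_{P,Q}, i.e., every Pauli term of H is non-identity on the first qubit. Then ‖(N'† ⊗ id)(H)‖_F² ≤ Υ(D,t) · ‖H‖_F², where N'† acts on the first qubit and id is the identity map on the remaining k−1 qubits. -/

import Mathlib

open scoped Kronecker
open Matrix
open scoped ComplexOrder

noncomputable section

abbrev QMat := Matrix (Fin 2) (Fin 2) ℂ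

abbrev NMat (n : ℕ) := Matrix (Fin n → Fin 2) (Fin n → Fin 2) ℂ

/-- The four single-qubit Pauli matrices `I, X, Y, Z`. -/
def pauli : Fin 4 → QMat :=
  ![1, !![0, 1; 1, 0], !![0, -Complex.I; Complex.I, 0], !![1, 0; 0, -1]]

/-- The non-identity Paulis `X, Y, Z`. -/
def pauliXYZ (i : Fin 3) : QMat := pauli i.succ

/-- The `n`-qubit Pauli string indexed by `s : Fin n → Fin 4`. -/
def pauliString {n : ℕ} (s : Fin n → Fin 4) : NMat n :=
  Matrix.of fun i j => ∏ k, pauli (s k) (i k) (j k)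

/-- Support of a Pauli string. -/
def psupp {n : ℕ} (s : Fin n → Fin 4) : Finset (Fin n) :=
  Finset.univ.filter fun k => s k ≠ 0

/-- The observable with real Pauli coefficients `a`. -/
def obsOf {n : ℕ} (a : (Fin n → Fin 4) → ℝ) : NMat n :=
  ∑ s : Fin n → Fin 4, (a s : ℂ) • pauliString s

/-- Normalized Frobenius norm squared, `‖M‖_F² = Tr[Mᴴ M]/dim`. -/
def frobSq {m : Type*} [Fintype m] (M : Matrix m m ℂ) : ℝ :=
  (Matrix.trace (Mᴴ * M)).re / (Fintype.card m : ℝ)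

def IsUnitary {m : Type*} [Fintype m] [DecidableEq m] (U : Matrix m m ℂ) : Prop :=
  U * Uᴴ = 1 ∧ Uᴴ * U = 1

/-- Hilbert–Schmidt adjoint of a (linear) map on matrices:
`Φ†(A) i j = conj (Tr[Aᴴ Φ(E_{ij})])`. -/
def hsAdj {m : Type*} [Fintype m] [DecidableEq m]
    (Φ : Matrix m m ℂ → Matrix m m ℂ) (A : Matrix m m ℂ) : Matrix m m ℂ :=
  Matrix.of fun i j => (starRingEnd ℂ) (Matrix.trace (Aᴴ * Φ (Matrix.single i j 1)))

/-- Pauli transfer matrix entry of a single-qubit map. -/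
def ptm (Φ : QMat → QMat) (a b : Fin 4) : ℂ :=
  Matrix.trace (pauli a * Φ (pauli b)) / 2

/-- Tensor product `Φ 0 ⊗ Φ 1 ⊗ ⋯ ⊗ Φ (n-1)` of single-qubit (linear) maps,
defined via the Pauli transfer matrices. -/
def tensorMap {n : ℕ} (Φ : Fin n → QMat → QMat) (M : NMat n) : NMat n :=
  ∑ s : Fin n → Fin 4, ∑ t : Fin n → Fin 4,
    ((∏ k, ptm (Φ k) (s k) (t k)) * (Matrix.trace (pauliString t * M) / ((2 : ℂ) ^ n))) •
      pauliString s

/-- `n`-fold tensor power `Φ^{⊗n}` of a single-qubit (linear) map. -/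
def tensorPow (n : ℕ) (Φ : QMat → QMat) : NMat n → NMat n :=
  tensorMap fun _ => Φ

/-- Tensor product of `n` single-qubit matrices. -/
def qprod {n : ℕ} (V : Fin n → QMat) : NMat n :=
  Matrix.of fun i j => ∏ k, V k (i k) (j k)

/-- The single-qubit normal-form map `N'` with parameters `(D, t)`:
`N'(I) = I + Σ t_i σ_i` and `N'(σ_i) = D_i σ_i`. -/
def normalForm (D t : Fin 3 → ℝ) (M : QMat) : QMat :=
  (Matrix.trace M / 2) • (1 + ∑ i, (t i : ℂ) • pauliXYZ i) +
    ∑ i, ((D i : ℂ) * (Matrix.trace (pauliXYZ i * M) / 2)) • pauliXYZ i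

/-- `Υ(D,t) = max_{‖a‖₂=1} Σ_i a_i² D_i² + (Σ_i a_i t_i)²`. -/
def Upsilon (D t : Fin 3 → ℝ) : ℝ :=
  sSup { r : ℝ | ∃ a : Fin 3 → ℝ, (∑ i, a i ^ 2) = 1 ∧
    r = (∑ i, a i ^ 2 * D i ^ 2) + (∑ i, a i * t i) ^ 2 }

/-- Choi matrix of a single-qubit map. -/
def choi (Φ : QMat → QMat) : Matrix (Fin 2 × Fin 2) (Fin 2 × Fin 2) ℂ :=
  Matrix.of fun p q => Φ (Matrix.single p.1 q.1 1) p.2 q.2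

/-- A single-qubit quantum channel: linear, trace preserving, completely positive. -/
structure IsChannel (Φ : QMat → QMat) : Prop where
  linear : IsLinearMap ℂ Φ
  tracePreserving : ∀ M, Matrix.trace (Φ M) = Matrix.trace M
  completelyPositive : (choi Φ).PosSemidef

/-- Unitary 1-design (finitely supported distribution). -/
def IsOneDesign {ι : Type*} [Fintype ι] (w : ι → ℝ) (W : ι → QMat) : Prop :=
  ∀ M : QMat, ∑ i, (w i : ℂ) • (W i * M * (W i)ᴴ) = (Matrix.trace M / 2) • (1 : QMat)

/-- The swap (flip) operator on two qubits. -/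
def swapOp : Matrix (Fin 2 × Fin 2) (Fin 2 × Fin 2) ℂ :=
  Matrix.of fun p q => if p.1 = q.2 ∧ p.2 = q.1 then 1 else 0

/-- Unitary 2-design: the twirl of any `M` matches the Haar value
`c_I • 1 + c_F • F` (closed form of the Haar average on `U(2)`). -/
def IsTwoDesign {ι : Type*} [Fintype ι] (w : ι → ℝ) (W : ι → QMat) : Prop :=
  ∀ M : Matrix (Fin 2 × Fin 2) (Fin 2 × Fin 2) ℂ,
    ∑ i, (w i : ℂ) • ((W i ⊗ₖ W i) * M * (W i ⊗ₖ W i)ᴴ) =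
      ((Matrix.trace M - Matrix.trace (swapOp * M) / 2) / 3) •
          (1 : Matrix (Fin 2 × Fin 2) (Fin 2 × Fin 2) ℂ) +
        ((Matrix.trace (swapOp * M) - Matrix.trace M / 2) / 3) • swapOp

/-- `η`-approximate scrambler (finitely supported distribution over `U(2)`). -/
def IsApproxScrambler {ι : Type*} [Fintype ι] (η : ℝ) (w : ι → ℝ) (U : ι → QMat) : Prop :=
  (∀ a b : Fin 4, a ≠ b →
      ∑ i, (w i : ℂ) • (((U i)ᴴ * pauli a * U i) ⊗ₖ ((U i)ᴴ * pauli b * U i)) = 0) ∧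
    ∀ a b : Fin 3,
      ∑ i, w i * ((Matrix.trace (pauliXYZ a * U i * pauliXYZ b * (U i)ᴴ)).re / 2) ^ 2 ≤
        (1 + 2 * η) / 3

/-- Locally unbiased distribution over linear maps on `n`-qubit matrices. -/
def LocallyUnbiased (n : ℕ) {ι : Type*} [Fintype ι] (w : ι → ℝ)
    (C : ι → NMat n → NMat n) : Prop :=
  ∃ (m : ℕ) (v : Fin n → Fin m → ℝ) (W : Fin n → Fin m → QMat),
    (∀ j k, 0 ≤ v j k) ∧ (∀ j, ∑ k, v j k = 1) ∧ (∀ j k, IsUnitary (W j k)) ∧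
      (∀ j, IsOneDesign (v j) (W j)) ∧
      ∀ A B : NMat n,
        ∑ i, (w i : ℂ) • (C i A ⊗ₖ C i B) =
          ∑ i, ∑ f : Fin n → Fin m,
            ((w i * ∏ j, v j (f j) : ℝ) : ℂ) •
              (C i (qprod (fun j => W j (f j)) * A * (qprod fun j => W j (f j))ᴴ) ⊗ₖ
                C i (qprod (fun j => W j (f j)) * B * (qprod fun j => W j (f j))ᴴ))

/-- Pauli-invariant distribution over linear maps on `n`-qubit matrices. -/
def PauliInvariant (n : ℕ) {ι : Type*} [Fintype ι] (w : ι → ℝ)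
    (C : ι → NMat n → NMat n) : Prop :=
  ∀ A B : NMat n,
    ∑ i, (w i : ℂ) • (C i A ⊗ₖ C i B) =
      ((4 : ℂ) ^ n)⁻¹ • ∑ r : Fin n → Fin 4, ∑ i, (w i : ℂ) •
        (C i (pauliString r * A * pauliString r) ⊗ₖ C i (pauliString r * B * pauliString r))

/-- Fourier coefficient `Φ_γ(C) = Π_j 2^{-n} Tr[P_j C_j(P_{j-1})]` of a Pauli path. -/
def pathCoeff {n L : ℕ} (Cs : Fin L → NMat n → NMat n)
    (γ : Fin (L + 1) → Fin n → Fin 4) : ℂ :=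
  ∏ j : Fin L,
    (Matrix.trace (pauliString (γ j.succ) * Cs j (pauliString (γ j.castSucc))) / ((2 : ℂ) ^ n))

/-- Path weight `|γ| = Σ_{j=1}^L |P_j|`. -/
def pathWeight {n L : ℕ} (γ : Fin (L + 1) → Fin n → Fin 4) : ℕ :=
  ∑ j : Fin L, (psupp (γ j.succ)).card

/-- The (non-physical) map `Ñ_p` with `Ñ_p(I) = (N(I) - pI)/(1-p)` and
`Ñ_p(σ) = N(σ)/(1-p)` for `σ ∈ {X,Y,Z}`. -/
def tildeMap (N : QMat → QMat) (p : ℝ) (M : QMat) : QMat :=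
  (Matrix.trace M / 2) • (((1 : ℂ) - (p : ℂ))⁻¹ • (N 1 - (p : ℂ) • (1 : QMat))) +
    ∑ i : Fin 3, (Matrix.trace (pauliXYZ i * M) / 2) • (((1 : ℂ) - (p : ℂ))⁻¹ • N (pauliXYZ i))

/-- The layers of an `L`-layered noisy circuit: `C_j(ρ) = N^{⊗n}(U_j ρ U_j†)` for `j < L`,
and the last layer is followed by the single-qubit layer `V`. -/
def layerMaps {n L : ℕ} (Nm : QMat → QMat) (U : Fin L → NMat n) (Vt : NMat n)
    (j : Fin L) (ρ : NMat n) : NMat n :=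
  if j.val = L - 1 then Vt * tensorPow n Nm (U j * ρ * (U j)ᴴ) * Vtᴴ
  else tensorPow n Nm (U j * ρ * (U j)ᴴ)

/-- Composition `C_L ∘ ⋯ ∘ C_1` of the layers. -/
def circuitOf {n L : ℕ} (lm : Fin L → NMat n → NMat n) (ρ : NMat n) : NMat n :=
  (List.finRange L).foldl (fun σ j => lm j σ) ρ

/-- Operator (spectral) norm of a matrix, as the `ℓ²→ℓ²` operator norm. -/
def specNorm {m : Type*} [Fintype m] (M : Matrix m m ℂ) : ℝ :=
  Real.sqrt (sSup { r : ℝ | ∃ v : m → ℂ,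
    (∑ x, Complex.normSq (v x)) = 1 ∧ r = ∑ x, Complex.normSq (M.mulVec v x) })

/-- Trace norm `‖M‖₁ = Tr √(Mᴴ M)` (sum of singular values). -/
def traceNorm {m : Type*} [Fintype m] [DecidableEq m] (M : Matrix m m ℂ) : ℝ :=
  (Matrix.trace ((Matrix.posSemidef_conjTranspose_mul_self M).1.eigenvectorUnitary.1 *
    Matrix.diagonal (((↑) : ℝ → ℂ) ∘ Real.sqrt ∘ (Matrix.posSemidef_conjTranspose_mul_self M).1.eigenvalues) *
    (star (Matrix.posSemidef_conjTranspose_mul_self M).1.eigenvectorUnitary : Matrix m m ℂ))).re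



section Aux
set_option maxHeartbeats 1000000

lemma pauli_herm (a : Fin 4) : (pauli a)ᴴ = pauli a := by
  fin_cases a <;> simp [pauli] <;>
    ext i j <;> fin_cases i <;> fin_cases j <;>
      simp [Matrix.conjTranspose_apply]

lemma trace_pauli_mul (a b : Fin 4) :
    Matrix.trace (pauli a * pauli b) = if a = b then 2 else 0 := by
  fin_cases a <;> fin_cases b <;>
    simp [pauli, Matrix.one_fin_two, Matrix.trace_fin_two, Matrix.mul_apply,
      Fin.sum_univ_two, Complex.ext_iff] <;> norm_num

lemma ptm_hsAdj_zero (D t : Fin 3 → ℝ) (a : Fin 4) :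
    ptm (hsAdj (normalForm D t)) a 0 = if a = 0 then 1 else 0 := by
  fin_cases a <;>
    simp [ptm, hsAdj, normalForm, pauliXYZ, pauli, Matrix.one_fin_two, Matrix.trace_fin_two,
      Matrix.mul_apply, Fin.sum_univ_two, Fin.sum_univ_three, Matrix.smul_apply,
      Matrix.add_apply, Matrix.single, Matrix.of_apply, Matrix.vecHead, Matrix.vecTail,
      Function.comp, show (Fin.succ 0 : Fin 4) = 1 from rfl, show (Fin.succ 1 : Fin 4) = 2 from rfl,
      show (Fin.succ 2 : Fin 4) = 3 from rfl, Complex.ext_iff, map_ofNat] <;> norm_num <;> ring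

lemma ptm_hsAdj_succ (D t : Fin 3 → ℝ) (a : Fin 4) (i : Fin 3) :
    ptm (hsAdj (normalForm D t)) a i.succ =
      if a = 0 then (t i : ℂ) else if a = i.succ then (D i : ℂ) else 0 := by
  fin_cases a <;> fin_cases i <;>
    simp [ptm, hsAdj, normalForm, pauliXYZ, pauli, Matrix.one_fin_two, Matrix.trace_fin_two,
      Matrix.mul_apply, Fin.sum_univ_two, Fin.sum_univ_three, Matrix.smul_apply,
      Matrix.add_apply, Matrix.single, Matrix.of_apply, Matrix.vecHead, Matrix.vecTail,
      Function.comp, show (Fin.succ 0 : Fin 4) = 1 from rfl, show (Fin.succ 1 : Fin 4) = 2 from rfl,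
      show (Fin.succ 2 : Fin 4) = 3 from rfl, Complex.ext_iff, map_ofNat] <;> norm_num <;> ring

end Aux

section Aux2
set_option maxHeartbeats 1000000

lemma sum_prod_eq {n : ℕ} (f : Fin n → Fin 2 → ℂ) :
    ∑ m : Fin n → Fin 2, ∏ k, f k (m k) = ∏ k, ∑ x, f k x := by
  have := Finset.prod_univ_sum (fun _ : Fin n => (Finset.univ : Finset (Fin 2))) fun k x => f k x
  rw [Fintype.piFinset_univ] at this
  exact this.symm

lemma trace_pauliString_mul {n : ℕ} (s t : Fin n → Fin 4) :
    Matrix.trace (pauliString s * pauliString t) = if s = t then (2:ℂ)^n else 0 := by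
  have h1 : Matrix.trace (pauliString s * pauliString t)
      = ∑ i : Fin n → Fin 2, ∑ m : Fin n → Fin 2,
          ∏ k, (pauli (s k) (i k) (m k) * pauli (t k) (m k) (i k)) := by
    simp only [Matrix.trace, Matrix.diag_apply, Matrix.mul_apply, pauliString, Matrix.of_apply,
      ← Finset.prod_mul_distrib]
  rw [h1]
  have h2 : ∀ i : Fin n → Fin 2,
      (∑ m : Fin n → Fin 2, ∏ k, (pauli (s k) (i k) (m k) * pauli (t k) (m k) (i k)))
        = ∏ k, (pauli (s k) * pauli (t k)) (i k) (i k) := by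
    intro i
    rw [sum_prod_eq fun k x => pauli (s k) (i k) x * pauli (t k) x (i k)]
    exact Finset.prod_congr rfl fun k _ => (Matrix.mul_apply).symm
  simp_rw [h2]
  rw [sum_prod_eq fun k x => (pauli (s k) * pauli (t k)) x x]
  have h3 : ∀ k, (∑ x, (pauli (s k) * pauli (t k)) x x) = if s k = t k then (2:ℂ) else 0 := by
    intro k; rw [← trace_pauli_mul]; rfl
  simp_rw [h3]
  by_cases h : s = t
  · simp [h]
  · rw [if_neg h]
    obtain ⟨k, hk⟩ := Function.ne_iff.mp h
    exact Finset.prod_eq_zero (Finset.mem_univ k) (if_neg hk)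

lemma pauli_entry_star (a : Fin 4) (i j : Fin 2) : star (pauli a j i) = pauli a i j := by
  have := congrFun (congrFun (pauli_herm a) i) j
  simpa [Matrix.conjTranspose_apply] using this

lemma pauliString_herm {n : ℕ} (s : Fin n → Fin 4) : (pauliString s)ᴴ = pauliString s := by
  ext i j
  simp only [Matrix.conjTranspose_apply, pauliString, Matrix.of_apply, star_prod]
  exact Finset.prod_congr rfl fun k _ => pauli_entry_star _ _ _

lemma trace_pauliString_obsOf {n : ℕ} (a : (Fin n → Fin 4) → ℝ) (u : Fin n → Fin 4) :
    Matrix.trace (pauliString u * obsOf a) = (2:ℂ)^n * (a u : ℂ) := by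
  simp [obsOf, Finset.mul_sum, Matrix.mul_smul, trace_pauliString_mul, mul_comm]

lemma ptm_id (a b : Fin 4) : ptm id a b = if a = b then 1 else 0 := by
  simp only [ptm, id_eq, trace_pauli_mul]
  split <;> norm_num

lemma frobSq_sum {n : ℕ} (c : (Fin n → Fin 4) → ℂ) :
    frobSq (∑ s, c s • pauliString s) = ∑ s, Complex.normSq (c s) := by
  have hct : (∑ s, c s • pauliString s)ᴴ = ∑ s, (starRingEnd ℂ) (c s) • pauliString s := by
    simp [Matrix.conjTranspose_sum, Matrix.conjTranspose_smul, pauliString_herm]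
  rw [frobSq, hct]
  have : Matrix.trace ((∑ s, (starRingEnd ℂ) (c s) • pauliString s) * ∑ s, c s • pauliString s)
      = ∑ s, ((starRingEnd ℂ) (c s) * c s) * (2:ℂ)^n := by
    rw [Finset.sum_mul]
    rw [Matrix.trace_sum]
    refine Finset.sum_congr rfl fun s _ => ?_
    rw [Finset.mul_sum, Matrix.trace_sum]
    simp only [Matrix.smul_mul, Matrix.mul_smul, Matrix.trace_smul, trace_pauliString_mul,
      smul_eq_mul, Finset.sum_ite_eq, Finset.mem_univ, if_true, mul_ite, mul_zero]
    ring
  rw [this]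
  have hcard : (Fintype.card (Fin n → Fin 2) : ℝ) = 2^n := by simp
  rw [hcard]
  rw [Complex.re_sum]
  rw [Finset.sum_div]
  refine Finset.sum_congr rfl fun s _ => ?_
  have : (starRingEnd ℂ) (c s) * c s * (2:ℂ)^n = (Complex.normSq (c s) * 2^n : ℝ) := by
    push_cast
    rw [Complex.normSq_eq_conj_mul_self]
  rw [this, Complex.ofReal_re]
  field_simp

lemma tensorMap_coeff {n : ℕ} (Φ : Fin n → QMat → QMat) (b : (Fin n → Fin 4) → ℝ) :
    tensorMap Φ (obsOf b) =
      ∑ s, (∑ u, (∏ k, ptm (Φ k) (s k) (u k)) * (b u : ℂ)) • pauliString s := by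
  unfold tensorMap
  refine Finset.sum_congr rfl fun s _ => ?_
  rw [Finset.sum_smul]
  refine Finset.sum_congr rfl fun u _ => ?_
  rw [trace_pauliString_obsOf]
  have h2 : ((2:ℂ)^n) ≠ 0 := by positivity
  congr 1
  field_simp


lemma upsilon_bddAbove (D t : Fin 3 → ℝ) :
    BddAbove { r : ℝ | ∃ a : Fin 3 → ℝ, (∑ i, a i ^ 2) = 1 ∧
      r = (∑ i, a i ^ 2 * D i ^ 2) + (∑ i, a i * t i) ^ 2 } := by
  refine ⟨(∑ i, D i ^ 2) + ∑ i, t i ^ 2, ?_⟩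
  rintro r ⟨a, ha, rfl⟩
  have h1 : (∑ i, a i ^ 2 * D i ^ 2) ≤ ∑ i, D i ^ 2 := by
    refine Finset.sum_le_sum fun i _ => ?_
    have : a i ^ 2 ≤ 1 := ha ▸ Finset.single_le_sum (fun j _ => sq_nonneg (a j)) (Finset.mem_univ i)
    exact mul_le_of_le_one_left (sq_nonneg _) this
  have h2 : (∑ i, a i * t i) ^ 2 ≤ ∑ i, t i ^ 2 := by
    calc (∑ i, a i * t i) ^ 2 ≤ (∑ i, a i ^ 2) * ∑ i, t i ^ 2 :=
          Finset.sum_mul_sq_le_sq_mul_sq _ _ _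
      _ = ∑ i, t i ^ 2 := by rw [ha, one_mul]
  exact add_le_add h1 h2

lemma key_ineq (D t : Fin 3 → ℝ) (c : Fin 3 → ℝ) :
    (∑ i, t i * c i) ^ 2 + (∑ i, (D i * c i) ^ 2) ≤ Upsilon D t * ∑ i, c i ^ 2 := by
  rcases eq_or_ne c 0 with rfl | hc
  · simp
  · have hN : 0 < ∑ i, c i ^ 2 := by
      obtain ⟨i, hi⟩ := Function.ne_iff.mp hc
      exact Finset.sum_pos' (fun j _ => sq_nonneg _) ⟨i, Finset.mem_univ i, sq_pos_of_ne_zero hi⟩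
    set N := ∑ i, c i ^ 2 with hNdef
    have hsq : Real.sqrt N ^ 2 = N := Real.sq_sqrt hN.le
    have hs0 : Real.sqrt N ≠ 0 := by positivity
    set a : Fin 3 → ℝ := fun i => c i / Real.sqrt N with ha
    have ha2 : ∀ i, a i ^ 2 = c i ^ 2 / N := by
      intro i; rw [ha]; simp only []; rw [div_pow, hsq]
    have hsum : (∑ i, a i ^ 2) = 1 := by
      simp_rw [ha2]; rw [← Finset.sum_div]; field_simp; rfl
    have hmem : (∑ i, a i ^ 2 * D i ^ 2) + (∑ i, a i * t i) ^ 2 ∈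
        { r : ℝ | ∃ a : Fin 3 → ℝ, (∑ i, a i ^ 2) = 1 ∧
          r = (∑ i, a i ^ 2 * D i ^ 2) + (∑ i, a i * t i) ^ 2 } := ⟨a, hsum, rfl⟩
    have hle : (∑ i, a i ^ 2 * D i ^ 2) + (∑ i, a i * t i) ^ 2 ≤ Upsilon D t :=
      le_csSup (upsilon_bddAbove D t) hmem
    have h1 : (∑ i, a i * t i) = (∑ i, t i * c i) / Real.sqrt N := by
      rw [Finset.sum_div]
      refine Finset.sum_congr rfl fun i _ => ?_
      rw [ha]; simp only []; ring
    have h2 : (∑ i, a i ^ 2 * D i ^ 2) = (∑ i, (D i * c i) ^ 2) / N := by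
      rw [Finset.sum_div]
      refine Finset.sum_congr rfl fun i _ => ?_
      rw [ha2 i]; ring
    rw [h1, h2, div_pow, hsq] at hle
    calc (∑ i, t i * c i) ^ 2 + (∑ i, (D i * c i) ^ 2)
        = N * ((∑ i, (D i * c i) ^ 2) / N + (∑ i, t i * c i) ^ 2 / N) := by
          field_simp; ring
      _ ≤ N * Upsilon D t := mul_le_mul_of_nonneg_left hle hN.le
      _ = Upsilon D t * N := mul_comm _ _

end Aux2


/-- One-step contraction: if every Pauli term of `H` is non-identity on
the first qubit, then `‖(N'† ⊗ id_{k-1})(H)‖_F² ≤ Υ(D,t)·‖H‖_F²`. -/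
theorem stmt_1 (D t : Fin 3 → ℝ) (k : ℕ) (hk : 0 < k)
    (b : (Fin k → Fin 4) → ℝ)
    (hb : ∀ s : Fin k → Fin 4, s ⟨0, hk⟩ = 0 → b s = 0) :
    frobSq (tensorMap
        (fun j => if j = ⟨0, hk⟩ then hsAdj (normalForm D t) else id) (obsOf b)) ≤
      Upsilon D t * frobSq (obsOf b) := by
  classical
  set j0 : Fin k := ⟨0, hk⟩ with hj0
  set Np := hsAdj (normalForm D t) with hNp
  set Φ : Fin k → QMat → QMat := fun j => if j = j0 then Np else id with hΦ
  set e := Equiv.funSplitAt j0 (Fin 4) with he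
  have hsymm0 : ∀ (q : Fin 4) (r : {j : Fin k // j ≠ j0} → Fin 4), e.symm (q, r) j0 = q := by
    intro q r; simp [he, Equiv.funSplitAt, Equiv.piSplitAt]
  have hsymmne : ∀ (q : Fin 4) (r : {j : Fin k // j ≠ j0} → Fin 4) (j : Fin k) (h : j ≠ j0),
      e.symm (q, r) j = r ⟨j, h⟩ := by
    intro q r j h; simp [he, Equiv.funSplitAt, Equiv.piSplitAt, h]
  set g : (Fin k → Fin 4) → ℂ :=
    fun s => ∑ u, (∏ k', ptm (Φ k') (s k') (u k')) * (b u : ℂ) with hg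
  rw [tensorMap_coeff Φ b, frobSq_sum]
  rw [show obsOf b = ∑ s, ((b s : ℂ)) • pauliString s from rfl, frobSq_sum]
  have hprod : ∀ s u : Fin k → Fin 4, (∏ k', ptm (Φ k') (s k') (u k'))
      = ptm Np (s j0) (u j0) *
          (if ∀ k' : Fin k, k' ≠ j0 → s k' = u k' then 1 else 0) := by
    intro s u
    rw [← Finset.mul_prod_erase Finset.univ _ (Finset.mem_univ j0)]
    have h0 : Φ j0 = Np := if_pos rfl
    rw [h0]
    congr 1
    calc ∏ k' ∈ Finset.univ.erase j0, ptm (Φ k') (s k') (u k')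
        = ∏ k' ∈ Finset.univ.erase j0, if s k' = u k' then 1 else 0 := by
          refine Finset.prod_congr rfl fun k' hk' => ?_
          have hne : k' ≠ j0 := (Finset.mem_erase.mp hk').1
          simp [hΦ, hne, ptm_id]
      _ = _ := by
          rw [Finset.prod_boole]
          simp only [Finset.mem_erase, Finset.mem_univ, and_true, ne_eq]
  have hgsplit : ∀ (q : Fin 4) (r : {j : Fin k // j ≠ j0} → Fin 4),
      g (e.symm (q, r)) = ∑ q' : Fin 4, ptm Np q q' * (b (e.symm (q', r)) : ℂ) := by
    intro q r
    show (∑ u, (∏ k', ptm (Φ k') (e.symm (q, r) k') (u k')) * (b u : ℂ)) = _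
    rw [← Equiv.sum_comp e.symm
      (fun u => (∏ k', ptm (Φ k') (e.symm (q, r) k') (u k')) * (b u : ℂ)),
      Fintype.sum_prod_type]
    refine Finset.sum_congr rfl fun q' _ => ?_
    have hfac : ∀ r', (∏ k', ptm (Φ k') (e.symm (q, r) k') (e.symm (q', r') k'))
        = ptm Np q q' * (if r' = r then 1 else 0) := by
      intro r'
      rw [hprod, hsymm0, hsymm0]
      congr 1
      refine if_congr ?_ rfl rfl
      constructor
      · intro hall
        funext j
        have := hall j.val j.prop
        rw [hsymmne q r j.val j.prop, hsymmne q' r' j.val j.prop] at this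
        simpa using this.symm
      · rintro rfl
        intro j hj
        rw [hsymmne q r' j hj, hsymmne q' r' j hj]
    simp only [hfac]
    simp [mul_ite, ite_mul, mul_zero, zero_mul, mul_one, Finset.sum_ite_eq']
  have hsplit : ∀ F : (Fin k → Fin 4) → ℝ,
      (∑ s, F s) = ∑ r : {j : Fin k // j ≠ j0} → Fin 4, ∑ q : Fin 4, F (e.symm (q, r)) := by
    intro F
    rw [← Equiv.sum_comp e.symm F, Fintype.sum_prod_type, Finset.sum_comm]
  rw [hsplit fun s => Complex.normSq (g s), hsplit fun s => Complex.normSq ((b s : ℂ))]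
  rw [Finset.mul_sum]
  refine Finset.sum_le_sum fun r _ => ?_
  set c : Fin 3 → ℝ := fun i => b (e.symm (i.succ, r)) with hc
  have hb0 : b (e.symm (0, r)) = 0 := hb _ (hsymm0 0 r)
  have hgz : g (e.symm (0, r)) = ((∑ i, t i * c i : ℝ) : ℂ) := by
    rw [hgsplit, Fin.sum_univ_succ]
    rw [ptm_hsAdj_zero]
    simp only [if_pos rfl, hb0, Complex.ofReal_zero, mul_zero, one_mul, zero_add]
    push_cast
    refine Finset.sum_congr rfl fun i _ => ?_
    rw [ptm_hsAdj_succ]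
    simp [hc]
  have hgs : ∀ i : Fin 3, g (e.symm (i.succ, r)) = ((D i * c i : ℝ) : ℂ) := by
    intro i
    rw [hgsplit, Fin.sum_univ_succ]
    rw [ptm_hsAdj_zero]
    rw [if_neg (Fin.succ_ne_zero i)]
    simp only [zero_mul, zero_add]
    have : ∀ j : Fin 3, ptm Np i.succ j.succ * (b (e.symm (j.succ, r)) : ℂ)
        = if i = j then ((D i * c i : ℝ) : ℂ) else 0 := by
      intro j
      rw [ptm_hsAdj_succ]
      rw [if_neg (Fin.succ_ne_zero i)]
      by_cases hij : i = j
      · subst hij; simp [hc]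
      · rw [if_neg (by simpa [Fin.succ_inj] using hij), if_neg hij, zero_mul]
    simp only [this]
    simp
  rw [Fin.sum_univ_succ, Fin.sum_univ_succ (f := fun q => Complex.normSq ((b (e.symm (q, r)) : ℂ)))]
  rw [hgz, hb0]
  simp only [hgs, Complex.normSq_ofReal, Complex.ofReal_zero, Complex.normSq_zero, zero_add]
  have hcast : ∀ x : ℝ, x * x = x ^ 2 := fun x => (sq x).symm
  simp only [hcast]
  have := key_ineq D t c
  calc (∑ i, t i * c i) ^ 2 + ∑ i : Fin 3, (D i * c i) ^ 2
      ≤ Upsilon D t * ∑ i, c i ^ 2 := key_ineq D t c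
    _ = Upsilon D t * ∑ i : Fin 3, b (e.symm (i.succ, r)) ^ 2 := rfl

end
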